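/- For every positive integer k, gcd(k, binomial(k+2,2) − 1, binomial(k+3,3) − 1) = k / (gcd(2,k) · gcd(3,k)). -/
import Mathlib

private lemma c2' (k : ℕ) : 2 * ((k+2).choose 2) = (k+1)*(k+2) := by
  induction k with
  | zero => decide
  | succ n ih =>
      have h : n+1+2 = (n+2)+1 := rfl
      rw [h, Nat.choose_succ_succ, Nat.choose_one_right, Nat.mul_add, ih]
      ring

private lemma c3' (k : ℕ) : 6 * ((k+3).choose 3) = (k+1)*(k+2)*(k+3) := by
  induction k with
  | zero => decide
  | succ n ih =>
      have h : n+1+3 = (n+3)+1 := rfl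
      rw [h, Nat.choose_succ_succ, Nat.mul_add, ih,
        show (6:ℕ) = 3*2 from rfl, Nat.mul_assoc, c2' (n+1)]
      ring

private lemma cop2 (t : ℕ) : Nat.gcd 2 (2*t+1) = 1 := by
  rw [Nat.gcd_rec, Nat.mul_add_mod]; decide

private lemma cop3 (t c : ℕ) (hc : c = 1 ∨ c = 2) : Nat.gcd 3 (3*t+c) = 1 := by
  rcases hc with rfl | rfl <;> rw [Nat.gcd_rec, Nat.mul_add_mod] <;> decide

private lemma gcd2_mul (t : ℕ) : Nat.gcd 2 (2*t) = 2 := by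
  rw [Nat.gcd_rec, Nat.mul_mod_right]; decide

private lemma gcd3_mul (t : ℕ) : Nat.gcd 3 (3*t) = 3 := by
  rw [Nat.gcd_rec, Nat.mul_mod_right]; decide

/-- For every positive integer `k`,
`gcd(k, C(k+2,2) − 1, C(k+3,3) − 1) = k / (gcd(2,k)·gcd(3,k))`.  The left-hand side is
the cyclic order `c(SU(4),k)` of the twisted K-homology of `SU(4)`. -/
theorem cyclic_order_SU4 (k : ℕ) (hk : 0 < k) :
    Nat.gcd k (Nat.gcd ((k + 2).choose 2 - 1) ((k + 3).choose 3 - 1)) =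
      k / (Nat.gcd 2 k * Nat.gcd 3 k) := by
  obtain ⟨q, r, hlt, rfl⟩ : ∃ q r, r < 6 ∧ k = 6 * q + r :=
    ⟨k / 6, k % 6, Nat.mod_lt _ (by norm_num), by omega⟩
  interval_cases r
  · -- r = 0
    simp only [Nat.add_zero]
    have hA : (6*q+2).choose 2 = q*(18*q+9) + 1 := by
      apply Nat.eq_of_mul_eq_mul_left (show 0 < 2 by norm_num)
      rw [c2']; ring
    have hB : (6*q+3).choose 3 = q*(36*q^2+36*q+11) + 1 := by
      apply Nat.eq_of_mul_eq_mul_left (show 0 < 6 by norm_num)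
      rw [c3']; ring
    have g2 : Nat.gcd 2 (6*q) = 2 := by
      rw [show 6*q = 2*(3*q) by ring]; exact gcd2_mul _
    have g3 : Nat.gcd 3 (6*q) = 3 := by
      rw [show 6*q = 3*(2*q) by ring]; exact gcd3_mul _
    rw [hA, hB, Nat.add_sub_cancel, Nat.add_sub_cancel, g2, g3,
      show (6*q)/(2*3) = q by omega, Nat.gcd_mul_left,
      show 6*q = q*6 by ring, Nat.gcd_mul_left]
    have hcop : Nat.gcd 6 (Nat.gcd (18*q+9) (36*q^2+36*q+11)) = 1 := by
      rw [show (6:ℕ) = 2*3 from rfl]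
      exact Nat.Coprime.mul
        (Nat.Coprime.coprime_dvd_right (Nat.gcd_dvd_right _ _)
          (by rw [show 36*q^2+36*q+11 = 2*(18*q^2+18*q+5)+1 by ring]; exact cop2 _))
        (Nat.Coprime.coprime_dvd_right (Nat.gcd_dvd_right _ _)
          (by rw [show 36*q^2+36*q+11 = 3*(12*q^2+12*q+3)+2 by ring]
              exact cop3 _ _ (Or.inr rfl)))
    rw [hcop, Nat.mul_one]
  · -- r = 1
    have hA : (6*q+1+2).choose 2 = (6*q+1)*(3*q+2) + 1 := by
      apply Nat.eq_of_mul_eq_mul_left (show 0 < 2 by norm_num)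
      rw [show 6*q+1+2 = (6*q+1)+2 by ring, c2']; ring
    have hB : (6*q+1+3).choose 3 = (6*q+1)*(6*q^2+8*q+3) + 1 := by
      apply Nat.eq_of_mul_eq_mul_left (show 0 < 6 by norm_num)
      rw [show 6*q+1+3 = (6*q+1)+3 by ring, c3']; ring
    have g2 : Nat.gcd 2 (6*q+1) = 1 := by
      rw [show 6*q+1 = 2*(3*q)+1 by ring]; exact cop2 _
    have g3 : Nat.gcd 3 (6*q+1) = 1 := by
      rw [show 6*q+1 = 3*(2*q)+1 by ring]; exact cop3 _ _ (Or.inl rfl)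
    rw [hA, hB, Nat.add_sub_cancel, Nat.add_sub_cancel, g2, g3,
      show (6*q+1)/(1*1) = 6*q+1 by omega,
      Nat.gcd_eq_left (Nat.dvd_gcd (dvd_mul_right _ _) (dvd_mul_right _ _))]
  · -- r = 2
    have hA : (6*q+2+2).choose 2 = (3*q+1)*(6*q+5) + 1 := by
      apply Nat.eq_of_mul_eq_mul_left (show 0 < 2 by norm_num)
      rw [show 6*q+2+2 = (6*q+2)+2 by ring, c2']; ring
    have hB : (6*q+2+3).choose 3 = (3*q+1)*(12*q^2+20*q+9) + 1 := by
      apply Nat.eq_of_mul_eq_mul_left (show 0 < 6 by norm_num)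
      rw [show 6*q+2+3 = (6*q+2)+3 by ring, c3']; ring
    have g2 : Nat.gcd 2 (6*q+2) = 2 := by
      rw [show 6*q+2 = 2*(3*q+1) by ring]; exact gcd2_mul _
    have g3 : Nat.gcd 3 (6*q+2) = 1 := by
      rw [show 6*q+2 = 3*(2*q)+2 by ring]; exact cop3 _ _ (Or.inr rfl)
    rw [hA, hB, Nat.add_sub_cancel, Nat.add_sub_cancel, g2, g3,
      show (6*q+2)/(2*1) = 3*q+1 by omega, Nat.gcd_mul_left,
      show 6*q+2 = (3*q+1)*2 by ring, Nat.gcd_mul_left]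
    have hcop : Nat.gcd 2 (Nat.gcd (6*q+5) (12*q^2+20*q+9)) = 1 :=
      Nat.Coprime.coprime_dvd_right (Nat.gcd_dvd_left _ _)
        (by rw [show 6*q+5 = 2*(3*q+2)+1 by ring]; exact cop2 _)
    rw [hcop, Nat.mul_one]
  · -- r = 3
    have hA : (6*q+3+2).choose 2 = (2*q+1)*(9*q+9) + 1 := by
      apply Nat.eq_of_mul_eq_mul_left (show 0 < 2 by norm_num)
      rw [show 6*q+3+2 = (6*q+3)+2 by ring, c2']; ring
    have hB : (6*q+3+3).choose 3 = (2*q+1)*(18*q^2+36*q+19) + 1 := by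
      apply Nat.eq_of_mul_eq_mul_left (show 0 < 6 by norm_num)
      rw [show 6*q+3+3 = (6*q+3)+3 by ring, c3']; ring
    have g2 : Nat.gcd 2 (6*q+3) = 1 := by
      rw [show 6*q+3 = 2*(3*q+1)+1 by ring]; exact cop2 _
    have g3 : Nat.gcd 3 (6*q+3) = 3 := by
      rw [show 6*q+3 = 3*(2*q+1) by ring]; exact gcd3_mul _
    rw [hA, hB, Nat.add_sub_cancel, Nat.add_sub_cancel, g2, g3,
      show (6*q+3)/(1*3) = 2*q+1 by omega, Nat.gcd_mul_left,
      show 6*q+3 = (2*q+1)*3 by ring, Nat.gcd_mul_left]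
    have hcop : Nat.gcd 3 (Nat.gcd (9*q+9) (18*q^2+36*q+19)) = 1 :=
      Nat.Coprime.coprime_dvd_right (Nat.gcd_dvd_right _ _)
        (by rw [show 18*q^2+36*q+19 = 3*(6*q^2+12*q+6)+1 by ring]
            exact cop3 _ _ (Or.inl rfl))
    rw [hcop, Nat.mul_one]
  · -- r = 4
    have hA : (6*q+4+2).choose 2 = (3*q+2)*(6*q+7) + 1 := by
      apply Nat.eq_of_mul_eq_mul_left (show 0 < 2 by norm_num)
      rw [show 6*q+4+2 = (6*q+4)+2 by ring, c2']; ring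
    have hB : (6*q+4+3).choose 3 = (3*q+2)*(12*q^2+28*q+17) + 1 := by
      apply Nat.eq_of_mul_eq_mul_left (show 0 < 6 by norm_num)
      rw [show 6*q+4+3 = (6*q+4)+3 by ring, c3']; ring
    have g2 : Nat.gcd 2 (6*q+4) = 2 := by
      rw [show 6*q+4 = 2*(3*q+2) by ring]; exact gcd2_mul _
    have g3 : Nat.gcd 3 (6*q+4) = 1 := by
      rw [show 6*q+4 = 3*(2*q+1)+1 by ring]; exact cop3 _ _ (Or.inl rfl)
    rw [hA, hB, Nat.add_sub_cancel, Nat.add_sub_cancel, g2, g3,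
      show (6*q+4)/(2*1) = 3*q+2 by omega, Nat.gcd_mul_left,
      show 6*q+4 = (3*q+2)*2 by ring, Nat.gcd_mul_left]
    have hcop : Nat.gcd 2 (Nat.gcd (6*q+7) (12*q^2+28*q+17)) = 1 :=
      Nat.Coprime.coprime_dvd_right (Nat.gcd_dvd_left _ _)
        (by rw [show 6*q+7 = 2*(3*q+3)+1 by ring]; exact cop2 _)
    rw [hcop, Nat.mul_one]
  · -- r = 5
    have hA : (6*q+5+2).choose 2 = (6*q+5)*(3*q+4) + 1 := by
      apply Nat.eq_of_mul_eq_mul_left (show 0 < 2 by norm_num)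
      rw [show 6*q+5+2 = (6*q+5)+2 by ring, c2']; ring
    have hB : (6*q+5+3).choose 3 = (6*q+5)*(6*q^2+16*q+11) + 1 := by
      apply Nat.eq_of_mul_eq_mul_left (show 0 < 6 by norm_num)
      rw [show 6*q+5+3 = (6*q+5)+3 by ring, c3']; ring
    have g2 : Nat.gcd 2 (6*q+5) = 1 := by
      rw [show 6*q+5 = 2*(3*q+2)+1 by ring]; exact cop2 _
    have g3 : Nat.gcd 3 (6*q+5) = 1 := by
      rw [show 6*q+5 = 3*(2*q+1)+2 by ring]; exact cop3 _ _ (Or.inr rfl)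
    rw [hA, hB, Nat.add_sub_cancel, Nat.add_sub_cancel, g2, g3,
      show (6*q+5)/(1*1) = 6*q+5 by omega,
      Nat.gcd_eq_left (Nat.dvd_gcd (dvd_mul_right _ _) (dvd_mul_right _ _))]
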